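/- Let k_min < K be indices, let q_l ∈ (0,1) for k_min ≤ l ≤ K−1, and let n_{k_min} ≥ n_{k_min+1} ≥ ⋯ ≥ n_K ≥ 0 be nonnegative reals with n_l > n_{l+1} for at least one l. Then the log-likelihood function 𝓛(ς) := Σ_{l=k_min}^{K−1} ( n_{l+1}·ς·log(q_l) + (n_l − n_{l+1})·log(1 − q_l^ς) ), defined for ς > 0, has second derivative 𝓛''(ς) = −Σ_{l=k_min}^{K−1} (n_l − n_{l+1})·(log q_l)²·q_l^ς / (1 − q_l^ς)² < 0; consequently 𝓛 is strictly concave on (0,∞) and its maximizer, if it exists, is the unique solution of 𝓛'(ς) = 0, where 𝓛'(ς) = Σ_{l=k_min}^{K−1} n_{l+1}·log(q_l) − Σ_{l=k_min}^{K−1} (n_l − n_{l+1})·log(q_l)·q_l^ς/(1 − q_l^ς). -/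

import Mathlib

open MeasureTheory ProbabilityTheory Filter Set
open scoped ENNReal Topology ProbabilityTheory

/-- The uniform probability measure on the circle of centre `c` and radius `ρ` in the
plane (identified with `ℂ`): the image of the normalized Lebesgue measure on `[0, 2π)`
under `θ ↦ c + ρ·e^{iθ}`. -/
noncomputable def uniformCircle (c : ℂ) (ρ : ℝ) : Measure ℂ :=
  (ENNReal.ofReal (2 * Real.pi))⁻¹ •
    (MeasureTheory.volume.restrict (Set.Ico (0 : ℝ) (2 * Real.pi))).map
      (fun θ : ℝ => c + (ρ : ℂ) * Complex.exp (θ * Complex.I))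

/-- A planar Brownian motion (with arbitrary initial distribution), realized as a
process with values in `ℂ ≅ ℝ²`: continuous paths, independent increments, and each
increment over `[s,t]` has as law the 2-dimensional centred Gaussian distribution of
variance `t - s` (i.e. the two real coordinates are independent `N(0, t-s)` variables). -/
structure IsPlanarBM {Ω : Type*} [MeasurableSpace Ω] (P : Measure Ω)
    (B : ℝ → Ω → ℂ) : Prop where
  meas : ∀ t : ℝ, Measurable (B t)
  cont : ∀ ω, Continuous fun t => B t ω
  indep_incr : ∀ (m : ℕ) (t : Fin (m + 1) → ℝ), Monotone t →
    iIndepFun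
      (fun i : Fin m => fun ω => B (t i.succ) ω - B (t i.castSucc) ω) P
  incr_law : ∀ s t : ℝ, 0 ≤ s → s ≤ t →
    P.map (fun ω => ((B t ω - B s ω).re, (B t ω - B s ω).im))
      = (gaussianReal 0 (Real.toNNReal (t - s))).prod
          (gaussianReal 0 (Real.toNNReal (t - s)))

/-- `hitTime B x ρ ω` is the first time `t ≥ 0` at which the path `B · ω` hits the
circle `∂𝓑(x, ρ)`. -/
noncomputable def hitTime {Ω : Type*} (B : ℝ → Ω → ℂ) (x : ℂ) (ρ : ℝ) (ω : Ω) : ℝ :=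
  sInf {t : ℝ | 0 ≤ t ∧ ‖B t ω - x‖ = ρ}

/-- `hitTimeAfter B x ρ σ ω` is the first time the path `B · ω` hits `∂𝓑(x, σ)`
after the hitting time of `∂𝓑(x, ρ)`. -/
noncomputable def hitTimeAfter {Ω : Type*} (B : ℝ → Ω → ℂ) (x : ℂ) (ρ σ : ℝ) (ω : Ω) : ℝ :=
  sInf {t : ℝ | hitTime B x ρ ω ≤ t ∧ ‖B t ω - x‖ = σ}

/-- The path of the process `B` run until time `T`, i.e. the set `B[0,T]`. -/
def pathUpTo {Ω : Type*} (B : ℝ → Ω → ℂ) (T : ℝ) (ω : Ω) : Set ℂ :=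
  (fun t => B t ω) '' Set.Icc 0 T

/-- The setting of the paper: `p` packets of respectively `n 1, …, n p` independent
planar Brownian motions, all started independently and uniformly on the unit circle. -/
structure BMSetup (p : ℕ) (n : Fin p → ℕ) where
  (Ω : Type)
  [mΩ : MeasurableSpace Ω]
  (P : Measure Ω)
  [isProb : IsProbabilityMeasure P]
  (B : (i : Fin p) → Fin (n i) → ℝ → Ω → ℂ)
  (isBM : ∀ i j, IsPlanarBM P (B i j))
  (start : ∀ i j, P.map (fun ω => B i j 0 ω) = uniformCircle 0 1)
  (indep : iIndepFun
      (fun (ij : Σ i : Fin p, Fin (n i)) ω => fun t => B ij.1 ij.2 t ω) P)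

attribute [instance] BMSetup.mΩ BMSetup.isProb

/-- The packet `𝔅^i(r)`: the union of the paths of the `i`-th packet, each run until
it first hits the circle of radius `r` around the origin. -/
noncomputable def BMSetup.packet {p : ℕ} {n : Fin p → ℕ} (S : BMSetup p n)
    (i : Fin p) (r : ℝ) (ω : S.Ω) : Set ℂ :=
  ⋃ j : Fin (n i), pathUpTo (S.B i j) (hitTime (S.B i j) 0 r ω) ω

/-- The non-intersection probability `ℙ{𝔅¹(r) ∩ ⋯ ∩ 𝔅^p(r) = ∅}`. -/
noncomputable def BMSetup.noMeetProb {p : ℕ} {n : Fin p → ℕ} (S : BMSetup p n) (r : ℝ) : ℝ :=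
  (S.P {ω | ⋂ i : Fin p, S.packet i r ω = ∅}).toReal

/-- `p` packets of respectively `n 1, …, n p` independent planar Brownian motions, all
started at the origin. Shifting by a configuration `x = (x^i_j)` produces the motions
"started at `x`" of the paper, with law `ℙ_x`. -/
structure BMSetup0 (p : ℕ) (n : Fin p → ℕ) where
  (Ω : Type)
  [mΩ : MeasurableSpace Ω]
  (P : Measure Ω)
  [isProb : IsProbabilityMeasure P]
  (B : (i : Fin p) → Fin (n i) → ℝ → Ω → ℂ)
  (isBM : ∀ i j, IsPlanarBM P (B i j))
  (start : ∀ i j ω, B i j 0 ω = 0)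
  (indep : iIndepFun
      (fun (ij : Σ i : Fin p, Fin (n i)) ω => fun t => B ij.1 ij.2 t ω) P)

attribute [instance] BMSetup0.mΩ BMSetup0.isProb

/-- The packet `𝔅^i(r)` for the motions started at the configuration `x` (i.e. the
shifted motions `x^i_j + B^i_j`), each path run until it first hits `∂𝓑(0,r)`. -/
noncomputable def BMSetup0.packetFrom {p : ℕ} {n : Fin p → ℕ} (S : BMSetup0 p n)
    (x : (i : Fin p) → Fin (n i) → ℂ) (i : Fin p) (r : ℝ) (ω : S.Ω) : Set ℂ :=
  ⋃ j : Fin (n i), pathUpTo (fun t ω => x i j + S.B i j t ω)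
      (hitTime (fun t ω => x i j + S.B i j t ω) 0 r ω) ω

/-- `ℙ_x{𝔅¹(r) ∩ ⋯ ∩ 𝔅^p(r) = ∅}`: the non-intersection probability for the motions
started at the configuration `x`. -/
noncomputable def BMSetup0.noMeetProbFrom {p : ℕ} {n : Fin p → ℕ} (S : BMSetup0 p n)
    (x : (i : Fin p) → Fin (n i) → ℂ) (r : ℝ) : ℝ :=
  (S.P {ω | ⋂ i : Fin p, S.packetFrom x i r ω = ∅}).toReal

/-- `a_r := sup_{|x^i_j| = 1} ℙ_x{𝔅¹(r) ∩ ⋯ ∩ 𝔅^p(r) = ∅}`, the supremum of the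
non-intersection probability over all starting configurations on the unit circle. -/
noncomputable def BMSetup0.supNoMeetProb {p : ℕ} {n : Fin p → ℕ} (S : BMSetup0 p n)
    (r : ℝ) : ℝ :=
  sSup {a : ℝ | ∃ x : (i : Fin p) → Fin (n i) → ℂ,
    (∀ i j, ‖x i j‖ = 1) ∧ a = S.noMeetProbFrom x r}

/-- `p` independent planar Brownian motions `W¹, …, W^p`, each started uniformly on the
circle of centre `0` and radius `ρ`. -/
structure WSetup (p : ℕ) (ρ : ℝ) where
  (Ω : Type)
  [mΩ : MeasurableSpace Ω]
  (P : Measure Ω)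
  [isProb : IsProbabilityMeasure P]
  (W : Fin p → ℝ → Ω → ℂ)
  (isBM : ∀ i, IsPlanarBM P (W i))
  (start : ∀ i, P.map (fun ω => W i 0 ω) = uniformCircle 0 ρ)
  (indep : iIndepFun (fun (i : Fin p) ω => fun t => W i t ω) P)

attribute [instance] WSetup.mΩ WSetup.isProb

/-- The log-likelihood analysis of the paper's Monte Carlo scheme: with
`q_l ∈ (0,1)` and nonincreasing nonnegative survival counts `n_l` (with at least one
strict decrease), the log-likelihood
`𝓛(ς) = Σ_l (n_{l+1}·ς·log q_l + (n_l − n_{l+1})·log(1 − q_l^ς))` has the stated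
first and second derivatives on `(0,∞)`, the second derivative is negative, `𝓛` is
strictly concave on `(0,∞)`, and a maximizer of `𝓛` on `(0,∞)`, if it exists, is the
unique solution of `𝓛'(ς) = 0`. -/
theorem loglikelihood_strictly_concave (kmin K : ℕ) (hkK : kmin < K)
    (q : ℕ → ℝ) (hq : ∀ l ∈ Finset.Ico kmin K, q l ∈ Set.Ioo (0 : ℝ) 1)
    (n : ℕ → ℝ) (hdec : ∀ l ∈ Finset.Ico kmin K, n (l + 1) ≤ n l)
    (hnonneg : ∀ l, kmin ≤ l → l ≤ K → 0 ≤ n l)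
    (hstrict : ∃ l ∈ Finset.Ico kmin K, n (l + 1) < n l)
    (L D DD : ℝ → ℝ)
    (hL : ∀ ς : ℝ, L ς = ∑ l ∈ Finset.Ico kmin K,
      (n (l + 1) * ς * Real.log (q l) + (n l - n (l + 1)) * Real.log (1 - q l ^ ς)))
    (hD : ∀ ς : ℝ, D ς = (∑ l ∈ Finset.Ico kmin K, n (l + 1) * Real.log (q l)) -
      ∑ l ∈ Finset.Ico kmin K,
        (n l - n (l + 1)) * (Real.log (q l) * q l ^ ς / (1 - q l ^ ς)))
    (hDD : ∀ ς : ℝ, DD ς = -∑ l ∈ Finset.Ico kmin K,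
      (n l - n (l + 1)) * ((Real.log (q l)) ^ 2 * q l ^ ς / (1 - q l ^ ς) ^ 2)) :
    (∀ ς : ℝ, 0 < ς → HasDerivAt L (D ς) ς) ∧
    (∀ ς : ℝ, 0 < ς → HasDerivAt D (DD ς) ς ∧ DD ς < 0) ∧
    StrictConcaveOn ℝ (Set.Ioi 0) L ∧
    (∀ ς₀ : ℝ, 0 < ς₀ → IsMaxOn L (Set.Ioi 0) ς₀ →
      (D ς₀ = 0 ∧ ∀ ς₁ : ℝ, 0 < ς₁ → D ς₁ = 0 → ς₁ = ς₀)) := by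
  -- Basic facts about q.
  have hq0 : ∀ l ∈ Finset.Ico kmin K, 0 < q l := fun l hl => (hq l hl).1
  have hq1 : ∀ l ∈ Finset.Ico kmin K, q l < 1 := fun l hl => (hq l hl).2
  have hu1 : ∀ ς : ℝ, 0 < ς → ∀ l ∈ Finset.Ico kmin K, q l ^ ς < 1 := by
    intro ς hς l hl
    exact Real.rpow_lt_one (hq0 l hl).le (hq1 l hl) hς
  have hu0 : ∀ (ς : ℝ), ∀ l ∈ Finset.Ico kmin K, 0 < q l ^ ς := by
    intro ς l hl; exact Real.rpow_pos_of_pos (hq0 l hl) ς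
  have hne : ∀ ς : ℝ, 0 < ς → ∀ l ∈ Finset.Ico kmin K, 1 - q l ^ ς ≠ 0 := by
    intro ς hς l hl
    have := hu1 ς hς l hl; linarith
  -- first derivative
  have hLD : ∀ ς : ℝ, 0 < ς → HasDerivAt L (D ς) ς := by
    intro ς hς
    have hterm : ∀ l ∈ Finset.Ico kmin K,
        HasDerivAt (fun s => n (l + 1) * s * Real.log (q l) +
            (n l - n (l + 1)) * Real.log (1 - q l ^ s))
          (n (l + 1) * Real.log (q l) -
            (n l - n (l + 1)) * (Real.log (q l) * q l ^ ς / (1 - q l ^ ς))) ς := by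
      intro l hl
      have hr : HasDerivAt (fun s : ℝ => q l ^ s) (q l ^ ς * Real.log (q l)) ς :=
        (Real.hasStrictDerivAt_const_rpow (hq0 l hl) ς).hasDerivAt
      have h1 : HasDerivAt (fun s : ℝ => n (l + 1) * s * Real.log (q l))
          (n (l + 1) * Real.log (q l)) ς := by
        have := ((hasDerivAt_id ς).const_mul (n (l + 1))).mul_const (Real.log (q l))
        simpa using this
      have h2 : HasDerivAt (fun s : ℝ => 1 - q l ^ s) (-(q l ^ ς * Real.log (q l))) ς :=
        hr.const_sub 1
      have h3 : HasDerivAt (fun s : ℝ => Real.log (1 - q l ^ s))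
          (-(q l ^ ς * Real.log (q l)) / (1 - q l ^ ς)) ς := h2.log (hne ς hς l hl)
      have h4 := h1.fun_add (h3.const_mul (n l - n (l + 1)))
      refine h4.congr_deriv ?_
      ring
    have hLfun : L = fun s => ∑ l ∈ Finset.Ico kmin K,
        (n (l + 1) * s * Real.log (q l) + (n l - n (l + 1)) * Real.log (1 - q l ^ s)) :=
      funext hL
    rw [hD ς, ← Finset.sum_sub_distrib, hLfun]
    exact HasDerivAt.fun_sum hterm
  -- second derivative
  have hDDD : ∀ ς : ℝ, 0 < ς → HasDerivAt D (DD ς) ς := by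
    intro ς hς
    have hterm : ∀ l ∈ Finset.Ico kmin K,
        HasDerivAt (fun s => (n l - n (l + 1)) * (Real.log (q l) * q l ^ s / (1 - q l ^ s)))
          ((n l - n (l + 1)) * ((Real.log (q l)) ^ 2 * q l ^ ς / (1 - q l ^ ς) ^ 2)) ς := by
      intro l hl
      have hr : HasDerivAt (fun s : ℝ => q l ^ s) (q l ^ ς * Real.log (q l)) ς :=
        (Real.hasStrictDerivAt_const_rpow (hq0 l hl) ς).hasDerivAt
      have h2 : HasDerivAt (fun s : ℝ => 1 - q l ^ s) (-(q l ^ ς * Real.log (q l))) ς :=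
        hr.const_sub 1
      have h5 := ((hr.const_mul (Real.log (q l))).fun_div h2 (hne ς hς l hl)).const_mul
        (n l - n (l + 1))
      refine h5.congr_deriv ?_
      ring
    have hsum := HasDerivAt.fun_sum hterm
    have hc : HasDerivAt (fun _ : ℝ => ∑ l ∈ Finset.Ico kmin K, n (l + 1) * Real.log (q l))
        (0 : ℝ) ς := hasDerivAt_const _ _
    have h7 := hc.fun_sub hsum
    have h8 : (fun s => (∑ l ∈ Finset.Ico kmin K, n (l + 1) * Real.log (q l)) -
        ∑ l ∈ Finset.Ico kmin K,
          (n l - n (l + 1)) * (Real.log (q l) * q l ^ s / (1 - q l ^ s))) = D :=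
      funext fun s => (hD s).symm
    rw [h8] at h7
    rw [hDD ς]
    refine h7.congr_deriv ?_
    ring
  have hDDneg : ∀ ς : ℝ, 0 < ς → DD ς < 0 := by
    intro ς hς
    rw [hDD ς, neg_lt_zero]
    obtain ⟨l0, hl0, hl0'⟩ := hstrict
    apply Finset.sum_pos' ?_ ⟨l0, hl0, ?_⟩
    · intro l hl
      have h1 := hu0 ς l hl
      have h2 := hne ς hς l hl
      have hge : (0:ℝ) ≤ n l - n (l + 1) := by have := hdec l hl; linarith
      have hsq : (0:ℝ) ≤ (1 - q l ^ ς) ^ 2 := sq_nonneg _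
      exact mul_nonneg hge (div_nonneg (mul_nonneg (sq_nonneg _) h1.le) hsq)
    · have h1 := hu0 ς l0 hl0
      have h2 := hne ς hς l0 hl0
      have h3 : Real.log (q l0) ≠ 0 :=
        Real.log_ne_zero_of_pos_of_ne_one (hq0 l0 hl0) (hq1 l0 hl0).ne
      have h4 : 0 < n l0 - n (l0 + 1) := by linarith
      exact mul_pos h4 (div_pos (mul_pos (pow_two_pos_of_ne_zero h3) h1) (pow_two_pos_of_ne_zero h2))
  refine ⟨hLD, fun ς hς => ⟨hDDD ς hς, hDDneg ς hς⟩, ?_, ?_⟩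
  · -- strict concavity
    apply strictConcaveOn_of_deriv2_neg (convex_Ioi 0)
    · intro x hx
      exact ((hLD x hx).differentiableAt.continuousAt).continuousWithinAt
    · intro x hx
      rw [interior_Ioi] at hx
      have hDx : Set.EqOn (deriv L) D (Set.Ioi 0) := fun y hy => (hLD y hy).deriv
      have : deriv (deriv L) x = deriv D x := by
        apply Filter.EventuallyEq.deriv_eq
        exact Filter.eventuallyEq_of_mem (Ioi_mem_nhds hx) hDx
      simp only [Function.iterate_succ, Function.iterate_zero, Function.comp_apply, id_eq]
      rw [this, (hDDD x hx).deriv]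
      exact hDDneg x hx
  · -- maximizer
    intro ς₀ hς₀ hmax
    have hD0 : D ς₀ = 0 := by
      have hloc : IsLocalMax L ς₀ := hmax.isLocalMax (Ioi_mem_nhds hς₀)
      have := hloc.hasDerivAt_eq_zero (hLD ς₀ hς₀)
      exact this
    refine ⟨hD0, fun ς₁ hς₁ hD1 => ?_⟩
    have hanti : StrictAntiOn D (Set.Ioi 0) := by
      apply strictAntiOn_of_deriv_neg (convex_Ioi 0)
      · intro x hx
        exact ((hDDD x hx).differentiableAt.continuousAt).continuousWithinAt
      · intro x hx
        rw [interior_Ioi] at hx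
        rw [(hDDD x hx).deriv]
        exact hDDneg x hx
    exact hanti.injOn hς₁ hς₀ (hD1.trans hD0.symm)
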